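/- arXiv:1910.07473 — 3 statements merged into one kernel-verified Lean document; each statement's English description precedes it below -/
import Mathlib

section
/- Let N be a positive integer, γ ∈ ℂ with |γ| = 1, and let (α_n : n ∈ ℤ), (β_n : n ∈ ℤ) be N-periodic real sequences with α_n > 0. Suppose the complex sequences (a_n), (b_n) (with a_n ≠ 0) satisfy: a_n/|a_n| → γ; (a_{n−1}/a_n), (b_n/a_n), (γ/a_n) ∈ D̃₁^N(ℂ); |a_n| → ∞; a_{n−1}/a_n − α_{n−1}/α_n → 0; b_n/a_n − β_n/α_n → 0. Let (x_n : n ≥ 0) and (y_n : n ≥ 0) be complex sequences such that (x_n/a_n), (y_n/a_n) ∈ D̃₁^N(ℂ) and x_n/a_n → 0, y_n/a_n → 0. Define ã_n = a_n + x_n and b̃_n = b_n + y_n, and assume ã_n ≠ 0 for all n. Then the sequences (ã_n), (b̃_n) satisfy the same conditions with the same α, β and γ: ã_n/|ã_n| → γ; (ã_{n−1}/ã_n), (b̃_n/ã_n), (γ/ã_n) ∈ D̃₁^N(ℂ); |ã_n| → ∞; ã_{n−1}/ã_n − α_{n−1}/α_n → 0; and b̃_n/ã_n − β_n/α_n → 0.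 -/
open Filter Matrix Topology

noncomputable section

/-- The operator norm of a 2×2 complex matrix (as operator on Euclidean ℂ²). -/
noncomputable def opNorm (X : Matrix (Fin 2) (Fin 2) ℂ) : ℝ :=
  ‖Matrix.toEuclideanCLM (𝕜 := ℂ) X‖

/-- Entrywise complex conjugation of a matrix. -/
def mconj (X : Matrix (Fin 2) (Fin 2) ℂ) : Matrix (Fin 2) (Fin 2) ℂ :=
  X.map (starRingEnd ℂ)

/-- Hermitian symmetrisation. -/
def symQ (X : Matrix (Fin 2) (Fin 2) ℂ) : Matrix (Fin 2) (Fin 2) ℂ :=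
  (2⁻¹ : ℂ) • (X + Xᴴ)

def Ematrix : Matrix (Fin 2) (Fin 2) ℂ := !![0, -1; 1, 0]

/-- One-step transfer matrix `B_j(z)`. -/
def Bmat (a b : ℕ → ℂ) (j : ℕ) (z : ℂ) : Matrix (Fin 2) (Fin 2) ℂ :=
  !![0, 1; -(a (j-1) / a j), (z - b j) / a j]

/-- `N`-step transfer matrix `X_n(z) = B_{n+N-1}(z) ⋯ B_n(z)`. -/
def transfer (a b : ℕ → ℂ) (N n : ℕ) (z : ℂ) : Matrix (Fin 2) (Fin 2) ℂ :=
  (((List.range N).map fun j => Bmat a b (n + j) z).reverse).prod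

/-- Generalised eigenvector associated with `z`. -/
def IsGenEigen (a b : ℕ → ℂ) (z : ℂ) (u : ℕ → ℂ) : Prop :=
  ¬(u 0 = 0 ∧ u 1 = 0) ∧
    ∀ n, 1 ≤ n → z * u n = a n * u (n+1) + b n * u n + a (n-1) * u (n-1)

/-- The twisted Stolz class `D̃₁(K, GL(2,ℂ))`. -/
def MemD1K (K : Set ℂ) (Y : ℕ → ℂ → Matrix (Fin 2) (Fin 2) ℂ) : Prop :=
  (∀ n, 1 ≤ n → ContinuousOn (Y n) K) ∧
  (∀ n, 1 ≤ n → ∀ z ∈ K, IsUnit (Y n z)) ∧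
  (∃ C : ℝ, ∀ n, 1 ≤ n → ∀ z ∈ K, opNorm (Y n z) ≤ C) ∧
  (∃ g : ℕ → ℝ, Summable g ∧ ∀ n, 1 ≤ n → ∀ z ∈ K,
      opNorm (Y (n+1) z - mconj (Y n z)) ≤ g n)

/-- The twisted Stolz class `D̃₁(ℂ)` for scalar sequences `(x_n : n ≥ 1)`. -/
def MemD1 (x : ℕ → ℂ) : Prop :=
  (∃ C : ℝ, ∀ n, 1 ≤ n → ‖x n‖ ≤ C) ∧
    Summable (fun n : ℕ => ‖x (n+2) - (starRingEnd ℂ) (x (n+1))‖)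

def MemD1N (N : ℕ) (x : ℕ → ℂ) : Prop := ∀ i < N, MemD1 (fun n => x (n*N+i))

/-- The quadratic form `v ↦ ⟨M v, v⟩`. -/
def Qform (M : Matrix (Fin 2) (Fin 2) ℂ) (v : Fin 2 → ℂ) : ℂ :=
  dotProduct (star v) (M.mulVec v)

def Qgam (a b : ℕ → ℂ) (N : ℕ) (γ : ℂ) (n : ℕ) (z : ℂ) (v : Fin 2 → ℂ) : ℂ :=
  Qform (symQ ((a (n+N-1) / (γ * (‖a (n+N-1)‖ : ℂ))) • (Ematrix * transfer a b N n z))) v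

def Qtil (a b : ℕ → ℂ) (N : ℕ) (γ : ℂ) (n : ℕ) (z : ℂ) (v : Fin 2 → ℂ) : ℂ :=
  Qform (symQ ((a (n+N-1) / (γ * (‖a (n+N-1)‖ : ℂ)) *
      (starRingEnd ℂ) (a (n+N-1) / a (n-1))) • (Ematrix * mconj (transfer a b N n z)))) v

/-- The `N`-shifted Turán determinant, expressed via a generalised eigenvector `u`. -/
def Sdet (a b : ℕ → ℂ) (N : ℕ) (γ : ℂ) (z : ℂ) (u : ℕ → ℂ) (n : ℕ) : ℂ :=
  (‖a (n+N-1)‖ : ℂ) * Qgam a b N γ n z ![u (n-1), u n]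

/-- Uniform non-degeneracy of a family of quadratic forms. -/
def UnifNonDeg (K : Set ℂ) (Q : ℕ → ℂ → (Fin 2 → ℂ) → ℂ) : Prop :=
  ∃ c₁ > (0:ℝ), ∃ c₂ > (0:ℝ), ∃ M : ℕ, 1 ≤ M ∧
    ∀ v : Fin 2 → ℂ, ∀ z ∈ K, ∀ n, M ≤ n →
      c₁ * (‖v 0‖^2 + ‖v 1‖^2) ≤ ‖Q n z v‖ ∧ ‖Q n z v‖ ≤ c₂ * (‖v 0‖^2 + ‖v 1‖^2)

def RealEntries (X : Matrix (Fin 2) (Fin 2) ℂ) : Prop := ∀ p q, (X p q).im = 0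

def discr (X : Matrix (Fin 2) (Fin 2) ℂ) : ℂ := (Matrix.trace X)^2 - 4 * X.det

/-- Periodic one-step matrix `𝔅_j(x)` (real). -/
def pB (α β : ℤ → ℝ) (j : ℤ) (x : ℝ) : Matrix (Fin 2) (Fin 2) ℝ :=
  !![0, 1; -(α (j-1) / α j), (x - β j) / α j]

/-- Periodic transfer matrix `𝔛_i(x) = 𝔅_{i+N-1}(x) ⋯ 𝔅_i(x)`. -/
def pX (α β : ℤ → ℝ) (N : ℕ) (i : ℤ) (x : ℝ) : Matrix (Fin 2) (Fin 2) ℝ :=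
  (((List.range N).map fun j => pB α β (i + j) x).reverse).prod

/-- The generalised eigenvector with initial data `α`. -/
def gev (a b : ℕ → ℂ) (z : ℂ) (α : Fin 2 → ℂ) : ℕ → ℂ
  | 0 => α 0
  | 1 => α 1
  | n+2 => ((z - b (n+1)) * gev a b z α (n+1) - a n * gev a b z α n) / a (n+1)

end

-- LEMMAS BLOCK (to be inserted before theorem)
open Filter Topology in
private lemma memD1_const_one : MemD1 (fun _ => (1:ℂ)) := by
  refine ⟨⟨1, fun n _ => by simp⟩, ?_⟩
  simpa using summable_zero

private lemma memD1_add {u v : ℕ → ℂ} (hu : MemD1 u) (hv : MemD1 v) :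
    MemD1 (fun n => u n + v n) := by
  obtain ⟨⟨C, hC⟩, hSu⟩ := hu
  obtain ⟨⟨D, hD⟩, hSv⟩ := hv
  refine ⟨⟨C + D, fun n hn => (norm_add_le _ _).trans (add_le_add (hC n hn) (hD n hn))⟩, ?_⟩
  refine Summable.of_nonneg_of_le (fun n => norm_nonneg _) (fun n => ?_) (hSu.add hSv)
  have : u (n+2) + v (n+2) - (starRingEnd ℂ) (u (n+1) + v (n+1))
      = (u (n+2) - (starRingEnd ℂ) (u (n+1))) + (v (n+2) - (starRingEnd ℂ) (v (n+1))) := by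
    rw [map_add]; ring
  rw [this]; exact norm_add_le _ _

private lemma memD1_mul {u v : ℕ → ℂ} (hu : MemD1 u) (hv : MemD1 v) :
    MemD1 (fun n => u n * v n) := by
  obtain ⟨⟨C, hC⟩, hSu⟩ := hu
  obtain ⟨⟨D, hD⟩, hSv⟩ := hv
  have hC0 : 0 ≤ C := le_trans (norm_nonneg _) (hC 1 le_rfl)
  have hD0 : 0 ≤ D := le_trans (norm_nonneg _) (hD 1 le_rfl)
  refine ⟨⟨C * D, fun n hn => ?_⟩, ?_⟩
  · rw [norm_mul]
    exact mul_le_mul (hC n hn) (hD n hn) (norm_nonneg _) hC0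
  · refine Summable.of_nonneg_of_le (fun n => norm_nonneg _) (fun n => ?_)
      ((hSv.mul_left C).add (hSu.mul_left D))
    have key : u (n+2) * v (n+2) - (starRingEnd ℂ) (u (n+1) * v (n+1))
        = u (n+2) * (v (n+2) - (starRingEnd ℂ) (v (n+1)))
          + (u (n+2) - (starRingEnd ℂ) (u (n+1))) * (starRingEnd ℂ) (v (n+1)) := by
      rw [RingHom.map_mul]; ring
    rw [key]
    refine (norm_add_le _ _).trans (add_le_add ?_ ?_)
    · rw [norm_mul]
      exact mul_le_mul_of_nonneg_right (hC (n+2) (by omega)) (norm_nonneg _)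
    · rw [norm_mul, mul_comm]
      refine mul_le_mul_of_nonneg_right ?_ (norm_nonneg _)
      simpa using hD (n+1) (by omega)

private lemma memD1_inv {u : ℕ → ℂ} {δ : ℝ} (hδ : 0 < δ)
    (hlb : ∀ n, 1 ≤ n → δ ≤ ‖u n‖) (hu : MemD1 u) :
    MemD1 (fun n => (u n)⁻¹) := by
  obtain ⟨⟨C, hC⟩, hSu⟩ := hu
  have hne : ∀ n, 1 ≤ n → u n ≠ 0 := by
    intro n hn h0
    have := hlb n hn
    rw [h0, norm_zero] at this
    linarith
  refine ⟨⟨δ⁻¹, fun n hn => ?_⟩, ?_⟩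
  · rw [norm_inv]
    exact inv_anti₀ hδ (hlb n hn)
  · refine Summable.of_nonneg_of_le (fun n => norm_nonneg _) (fun n => ?_)
      (hSu.mul_left (δ⁻¹ * δ⁻¹))
    have h2 : u (n+2) ≠ 0 := hne _ (by omega)
    have h1 : (starRingEnd ℂ) (u (n+1)) ≠ 0 := by
      simpa using hne (n+1) (by omega)
    have key : (u (n+2))⁻¹ - (starRingEnd ℂ) ((u (n+1))⁻¹)
        = ((starRingEnd ℂ) (u (n+1)) - u (n+2)) / (u (n+2) * (starRingEnd ℂ) (u (n+1))) := by
      rw [map_inv₀]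
      field_simp
    rw [key, norm_div, norm_sub_rev, norm_mul]
    have hb1 : δ ≤ ‖u (n+2)‖ := hlb _ (by omega)
    have hb2 : δ ≤ ‖(starRingEnd ℂ) (u (n+1))‖ := by simpa using hlb (n+1) (by omega)
    have hprod : δ * δ ≤ ‖u (n+2)‖ * ‖(starRingEnd ℂ) (u (n+1))‖ :=
      mul_le_mul hb1 hb2 hδ.le (norm_nonneg _)
    calc ‖u (n+2) - (starRingEnd ℂ) (u (n+1))‖ /
          (‖u (n+2)‖ * ‖(starRingEnd ℂ) (u (n+1))‖)
        ≤ ‖u (n+2) - (starRingEnd ℂ) (u (n+1))‖ / (δ * δ) := by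
          apply div_le_div_of_nonneg_left (norm_nonneg _) (by positivity) hprod
      _ = δ⁻¹ * δ⁻¹ * ‖u (n+2) - (starRingEnd ℂ) (u (n+1))‖ := by
          field_simp

private lemma memD1_congr {u v : ℕ → ℂ} (h : ∀ n, 1 ≤ n → u n = v n) (hu : MemD1 u) :
    MemD1 v := by
  obtain ⟨⟨C, hC⟩, hS⟩ := hu
  refine ⟨⟨C, fun n hn => (h n hn) ▸ hC n hn⟩, ?_⟩
  refine hS.congr fun n => ?_
  rw [h (n+2) (by omega), h (n+1) (by omega)]

private lemma memD1_shift {w : ℕ → ℂ} (hw : MemD1 w) : MemD1 (fun n => w (n-1)) := by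
  obtain ⟨⟨C, hC⟩, hS⟩ := hw
  refine ⟨⟨max C ‖w 0‖, fun n hn => ?_⟩, ?_⟩
  · rcases Nat.lt_or_ge n 2 with h | h
    · interval_cases n
      exact le_max_right _ _
    · exact le_trans (hC (n-1) (by omega)) (le_max_left _ _)
  · have hS' : Summable (fun n => ‖w (n+1+1) - (starRingEnd ℂ) (w (n+1))‖) := hS
    have := (summable_nat_add_iff (f := fun n => ‖w (n+1) - (starRingEnd ℂ) (w n)‖) 1).mp hS'
    refine this.congr fun n => ?_
    simp

open Filter Topology in
private lemma memD1N_add {N : ℕ} {u v : ℕ → ℂ} (hu : MemD1N N u) (hv : MemD1N N v) :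
    MemD1N N (fun n => u n + v n) := fun i hi => memD1_add (hu i hi) (hv i hi)

private lemma memD1N_mul {N : ℕ} {u v : ℕ → ℂ} (hu : MemD1N N u) (hv : MemD1N N v) :
    MemD1N N (fun n => u n * v n) := fun i hi => memD1_mul (hu i hi) (hv i hi)

private lemma memD1N_inv {N : ℕ} (hN : 1 ≤ N) {u : ℕ → ℂ} {δ : ℝ} (hδ : 0 < δ)
    (hlb : ∀ n, 1 ≤ n → δ ≤ ‖u n‖) (hu : MemD1N N u) :
    MemD1N N (fun n => (u n)⁻¹) := by
  intro i hi
  exact memD1_inv hδ (fun n hn => hlb (n*N+i) (by nlinarith)) (hu i hi)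

private lemma memD1N_shift {N : ℕ} (hN : 1 ≤ N) {u : ℕ → ℂ} (h : MemD1N N u) :
    MemD1N N (fun n => u (n-1)) := by
  intro i hi
  rcases Nat.eq_zero_or_pos i with rfl | hip
  · have hw := h (N-1) (by omega)
    have hs := memD1_shift hw
    refine memD1_congr (fun n hn => ?_) hs
    obtain ⟨m, rfl⟩ := Nat.exists_eq_add_of_le hn
    show u ((1+m-1)*N + (N-1)) = u ((1+m)*N + 0 - 1)
    congr 1
    have h1 : 1+m-1 = m := by omega
    rw [h1, add_mul, one_mul]
    generalize m*N = k
    omega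
  · have hw := h (i-1) (by omega)
    refine memD1_congr (fun n hn => ?_) hw
    show u (n*N + (i-1)) = u (n*N + i - 1)
    congr 1
    generalize n*N = k
    omega

private lemma periodic_bound {f : ℕ → ℝ} {N : ℕ} (hN : 1 ≤ N) (hper : ∀ n, f (n+N) = f n) :
    ∃ B : ℝ, ∀ n, |f n| ≤ B := by
  have hp : Function.Periodic f N := fun n => hper n
  have hne : ((Finset.range N).image fun i => |f i|).Nonempty :=
    Finset.image_nonempty.mpr (Finset.nonempty_range_iff.mpr (by omega))
  refine ⟨((Finset.range N).image fun i => |f i|).max' hne, fun n => ?_⟩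
  have h1 : f n = f (n % N) := (hp.map_mod_nat n).symm
  rw [h1]
  refine Finset.le_max' _ _ ?_
  exact Finset.mem_image.mpr ⟨n % N, Finset.mem_range.mpr (Nat.mod_lt _ (by omega)), rfl⟩

open Filter Topology in
private lemma lower_bdd {u : ℕ → ℂ} (hne : ∀ n, u n ≠ 0)
    (h : Tendsto u atTop (𝓝 1)) : ∃ δ > 0, ∀ n, 1 ≤ n → δ ≤ ‖u n‖ := by
  have hn1 : Tendsto (fun n => ‖u n‖) atTop (𝓝 1) := by
    simpa using h.norm
  have h2 : ∀ᶠ n in atTop, (1:ℝ)/2 ≤ ‖u n‖ :=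
    hn1.eventually (eventually_ge_nhds (by norm_num))
  obtain ⟨M, hM⟩ := eventually_atTop.mp h2
  set F := insert ((1:ℝ)/2) ((Finset.Icc 1 M).image fun n => ‖u n‖) with hF
  have hne' : F.Nonempty := ⟨1/2, Finset.mem_insert_self _ _⟩
  have hpos : ∀ x ∈ F, 0 < x := by
    intro x hx
    rcases Finset.mem_insert.mp hx with rfl | hx
    · norm_num
    · obtain ⟨k, -, rfl⟩ := Finset.mem_image.mp hx
      exact norm_pos_iff.mpr (hne k)
  refine ⟨F.min' hne', hpos _ (F.min'_mem hne'), fun n hn => ?_⟩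
  rcases le_or_gt n M with hc | hc
  · exact Finset.min'_le _ _
      (Finset.mem_insert_of_mem (Finset.mem_image.mpr ⟨n, Finset.mem_Icc.mpr ⟨hn, hc⟩, rfl⟩))
  · exact le_trans (Finset.min'_le _ _ (Finset.mem_insert_self _ _)) (hM n hc.le)

private lemma aux_split {t c A U : ℂ} (hc : c ≠ 0) (hA : A ≠ 0) (hU : U ≠ 0) :
    t / (A * U) = (c / A) * ((t / c) * U⁻¹) := by field_simp <;> ring

private lemma aux_B {t1 t2 a1 a2 : ℂ} (h1 : a1 ≠ 0) (h2 : a2 ≠ 0) (h3 : t2 ≠ 0) :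
    t1 / a1 * (a1 / a2) * (a2 / t2) = t1 / t2 := by field_simp <;> ring

private lemma aux_C {p q t2 a2 : ℂ} (h2 : a2 ≠ 0) (h3 : t2 ≠ 0) :
    (p / a2 + q / a2) * (a2 / t2) = (p + q) / t2 := by field_simp <;> ring

private lemma aux_D {g t2 a2 : ℂ} (h2 : a2 ≠ 0) (h3 : t2 ≠ 0) :
    (g / a2) * (a2 / t2) = g / t2 := by field_simp <;> ring

private lemma aux_F {t1 t2 a1 a2 : ℂ} (h1 : a1 ≠ 0) (h2 : a2 ≠ 0) (h3 : t2 ≠ 0) :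
    t1 / t2 - a1 / a2 = (a1 / a2) * ((t1 / a1) * (a2 / t2) - 1) := by field_simp <;> ring
open Filter Matrix Topology in
/-- Proposition 8: additive perturbations preserve the hypotheses of Corollary 3. -/
theorem statement15
    (N : ℕ) (hN : 1 ≤ N) (γ : ℂ) (hγ : ‖γ‖ = 1)
    (α β : ℤ → ℝ) (hαper : ∀ n, α (n+N) = α n) (hβper : ∀ n, β (n+N) = β n)
    (hαpos : ∀ n, 0 < α n)
    (a b : ℕ → ℂ) (ha : ∀ n, a n ≠ 0)
    (hγlim : Tendsto (fun n : ℕ => a n / (‖a n‖ : ℂ)) atTop (𝓝 γ))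
    (hD1a : MemD1N N (fun n => a (n-1) / a n))
    (hD1b : MemD1N N (fun n => b n / a n))
    (hD1g : MemD1N N (fun n => γ / a n))
    (hainf : Tendsto (fun n : ℕ => ‖a n‖) atTop atTop)
    (hca : Tendsto (fun n : ℕ =>
      a (n-1) / a n - ((α ((n:ℤ)-1) / α (n:ℤ) : ℝ) : ℂ)) atTop (𝓝 0))
    (hcb : Tendsto (fun n : ℕ =>
      b n / a n - ((β (n:ℤ) / α (n:ℤ) : ℝ) : ℂ)) atTop (𝓝 0))
    (x y : ℕ → ℂ)
    (hxD : MemD1N N (fun n => x n / a n)) (hyD : MemD1N N (fun n => y n / a n))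
    (hx0 : Tendsto (fun n : ℕ => x n / a n) atTop (𝓝 0))
    (hy0 : Tendsto (fun n : ℕ => y n / a n) atTop (𝓝 0))
    (ta tb : ℕ → ℂ)
    (htaDef : ∀ n, ta n = a n + x n) (htbDef : ∀ n, tb n = b n + y n)
    (hta : ∀ n, ta n ≠ 0) :
    Tendsto (fun n : ℕ => ta n / (‖ta n‖ : ℂ)) atTop (𝓝 γ) ∧
    MemD1N N (fun n => ta (n-1) / ta n) ∧
    MemD1N N (fun n => tb n / ta n) ∧
    MemD1N N (fun n => γ / ta n) ∧
    Tendsto (fun n : ℕ => ‖ta n‖) atTop atTop ∧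
    Tendsto (fun n : ℕ =>
      ta (n-1) / ta n - ((α ((n:ℤ)-1) / α (n:ℤ) : ℝ) : ℂ)) atTop (𝓝 0) ∧
    Tendsto (fun n : ℕ =>
      tb n / ta n - ((β (n:ℤ) / α (n:ℤ) : ℝ) : ℂ)) atTop (𝓝 0) := by
  -- basic facts about u n = ta n / a n
  have hune : ∀ n, (ta n / a n) ≠ 0 := fun n => div_ne_zero (hta n) (ha n)
  have hueq : ∀ n, ta n / a n = 1 + x n / a n := by
    intro n; rw [htaDef n, add_div, div_self (ha n)]
  have hu1 : Tendsto (fun n => ta n / a n) atTop (𝓝 1) := by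
    have h0 : Tendsto (fun n : ℕ => (1:ℂ) + x n / a n) atTop (𝓝 1) := by
      have hc : Tendsto (fun _ : ℕ => (1:ℂ)) atTop (𝓝 1) := tendsto_const_nhds
      simpa using hc.add hx0
    exact h0.congr fun n => (hueq n).symm
  have huD1 : MemD1N N (fun n => ta n / a n) := by
    have h0 : MemD1N N (fun n => (1:ℂ) + x n / a n) :=
      memD1N_add (fun i _ => memD1_const_one) hxD
    have he : (fun n => ta n / a n) = fun n => (1:ℂ) + x n / a n := funext hueq
    rw [he]; exact h0
  obtain ⟨δ, hδ, hlb⟩ := lower_bdd hune hu1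
  have hwD1 : MemD1N N (fun n => (ta n / a n)⁻¹) := memD1N_inv hN hδ hlb huD1
  have hw1 : Tendsto (fun n => a n / ta n) atTop (𝓝 1) := by
    have h0 := hu1.inv₀ one_ne_zero
    simp only [inv_div, inv_one] at h0
    exact h0
  have hnta : ∀ n, ‖ta n‖ = ‖a n‖ * ‖ta n / a n‖ := by
    intro n
    rw [norm_div, mul_comm, div_mul_cancel₀ _ (norm_ne_zero_iff.mpr (ha n))]
  have hun : Tendsto (fun n => ‖ta n / a n‖) atTop (𝓝 1) := by simpa using hu1.norm
  -- (A) phase convergence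
  have hA : Tendsto (fun n : ℕ => ta n / (‖ta n‖ : ℂ)) atTop (𝓝 γ) := by
    have heq : ∀ n, ta n / (‖ta n‖ : ℂ)
        = (a n / (‖a n‖ : ℂ)) * ((ta n / a n) * (((‖ta n / a n‖ : ℝ) : ℂ))⁻¹) := by
      intro n
      have ha' : ((‖a n‖ : ℝ) : ℂ) ≠ 0 := by
        simpa using norm_ne_zero_iff.mpr (ha n)
      have hu' : ((‖ta n / a n‖ : ℝ) : ℂ) ≠ 0 := by
        simpa using norm_ne_zero_iff.mpr (hune n)
      have hcast : ((‖ta n‖ : ℝ) : ℂ) = ((‖a n‖ : ℝ) : ℂ) * ((‖ta n / a n‖ : ℝ) : ℂ) := by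
        rw [hnta n]; push_cast; ring
      rw [hcast]
      exact aux_split (ha n) ha' hu'
    have h2 : Tendsto (fun n => (((‖ta n / a n‖ : ℝ) : ℂ))) atTop (𝓝 1) := by
      have h3 := (Complex.continuous_ofReal.tendsto 1).comp hun
      rw [Complex.ofReal_one] at h3
      exact h3
    have h4 : Tendsto (fun n => (ta n / a n) * (((‖ta n / a n‖ : ℝ) : ℂ))⁻¹)
        atTop (𝓝 1) := by
      have := hu1.mul (h2.inv₀ one_ne_zero)
      simpa using this
    have h5 := hγlim.mul h4
    rw [mul_one] at h5
    exact h5.congr fun n => (heq n).symm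
  -- (B) membership for ta(n-1)/ta n
  have hB : MemD1N N (fun n => ta (n-1) / ta n) := by
    have h1 := memD1N_shift hN huD1
    have h2 := memD1N_mul (memD1N_mul h1 hD1a) hwD1
    refine fun i hi => memD1_congr (fun n hn => ?_) (h2 i hi)
    show (ta (n*N+i-1) / a (n*N+i-1)) * (a (n*N+i-1) / a (n*N+i))
        * (ta (n*N+i) / a (n*N+i))⁻¹ = ta (n*N+i-1) / ta (n*N+i)
    rw [inv_div]
    exact aux_B (ha _) (ha _) (hta _)
  -- (C) membership for tb n / ta n
  have hC : MemD1N N (fun n => tb n / ta n) := by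
    have h2 := memD1N_mul (memD1N_add hD1b hyD) hwD1
    refine fun i hi => memD1_congr (fun n hn => ?_) (h2 i hi)
    show (b (n*N+i) / a (n*N+i) + y (n*N+i) / a (n*N+i))
        * (ta (n*N+i) / a (n*N+i))⁻¹ = tb (n*N+i) / ta (n*N+i)
    rw [inv_div, htbDef]
    exact aux_C (ha _) (hta _)
  -- (D) membership for γ / ta n
  have hD : MemD1N N (fun n => γ / ta n) := by
    have h2 := memD1N_mul hD1g hwD1
    refine fun i hi => memD1_congr (fun n hn => ?_) (h2 i hi)
    show (γ / a (n*N+i)) * (ta (n*N+i) / a (n*N+i))⁻¹ = γ / ta (n*N+i)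
    rw [inv_div]
    exact aux_D (ha _) (hta _)
  -- (E) norm divergence
  have hE : Tendsto (fun n : ℕ => ‖ta n‖) atTop atTop := by
    have hev : ∀ᶠ n in atTop, ‖a n‖ * (1/2) ≤ ‖ta n‖ := by
      filter_upwards [hun.eventually (eventually_ge_nhds (by norm_num : (1:ℝ)/2 < 1))]
        with n hn
      rw [hnta n]
      exact mul_le_mul_of_nonneg_left hn (norm_nonneg _)
    exact tendsto_atTop_mono' _ hev (hainf.atTop_mul_const (by norm_num))
  -- periodic bounds
  obtain ⟨Bα, hBα⟩ := periodic_bound (f := fun n : ℕ => α ((n:ℤ)-1) / α (n:ℤ)) hN (by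
    intro n
    push_cast
    rw [show (n:ℤ) + N - 1 = ((n:ℤ) - 1) + N by ring, hαper, hαper])
  obtain ⟨Bβ, hBβ⟩ := periodic_bound (f := fun n : ℕ => β (n:ℤ) / α (n:ℤ)) hN (by
    intro n
    push_cast
    rw [hαper, hβper])
  -- (F) convergence of ta(n-1)/ta n
  have hF : Tendsto (fun n : ℕ =>
      ta (n-1) / ta n - ((α ((n:ℤ)-1) / α (n:ℤ) : ℝ) : ℂ)) atTop (𝓝 0) := by
    have hg : Tendsto (fun n : ℕ => (ta (n-1) / a (n-1)) * (a n / ta n) - 1)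
        atTop (𝓝 0) := by
      have h1 : Tendsto (fun n : ℕ => ta (n-1) / a (n-1)) atTop (𝓝 1) :=
        hu1.comp (tendsto_sub_atTop_nat 1)
      have := (h1.mul hw1).sub (tendsto_const_nhds (x := (1:ℂ)))
      simpa using this
    have hrb : ∀ᶠ n in atTop, ‖a (n-1) / a n‖ ≤ Bα + 1 := by
      have h0 : Tendsto (fun n : ℕ =>
          ‖a (n-1) / a n - ((α ((n:ℤ)-1) / α (n:ℤ) : ℝ) : ℂ)‖) atTop (𝓝 0) := by
        simpa using hca.norm
      filter_upwards [h0.eventually (eventually_le_nhds (by norm_num : (0:ℝ) < 1))]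
        with n hn
      calc ‖a (n-1) / a n‖
          ≤ ‖a (n-1) / a n - ((α ((n:ℤ)-1) / α (n:ℤ) : ℝ) : ℂ)‖
            + ‖((α ((n:ℤ)-1) / α (n:ℤ) : ℝ) : ℂ)‖ := by
            simpa using norm_add_le
              (a (n-1) / a n - ((α ((n:ℤ)-1) / α (n:ℤ) : ℝ) : ℂ))
              (((α ((n:ℤ)-1) / α (n:ℤ) : ℝ) : ℂ))
        _ ≤ 1 + Bα := by
            refine add_le_add hn ?_
            rw [Complex.norm_real, Real.norm_eq_abs]
            exact hBα n
        _ = Bα + 1 := by ring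
    have hdiff : Tendsto (fun n : ℕ => ta (n-1) / ta n - a (n-1) / a n) atTop (𝓝 0) := by
      have hgn : Tendsto (fun n : ℕ =>
          (Bα+1) * ‖(ta (n-1) / a (n-1)) * (a n / ta n) - 1‖) atTop (𝓝 0) := by
        have := hg.norm.const_mul (Bα+1)
        simpa using this
      refine squeeze_zero_norm' ?_ hgn
      filter_upwards [hrb] with n hn
      have heq : ta (n-1) / ta n - a (n-1) / a n
          = (a (n-1) / a n) * ((ta (n-1) / a (n-1)) * (a n / ta n) - 1) :=
        aux_F (ha _) (ha _) (hta _)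
      rw [heq, norm_mul]
      exact mul_le_mul_of_nonneg_right hn (norm_nonneg _)
    have := hdiff.add hca
    rw [add_zero] at this
    exact this.congr fun n => by ring
  -- (G) convergence of tb n / ta n
  have hG : Tendsto (fun n : ℕ =>
      tb n / ta n - ((β (n:ℤ) / α (n:ℤ) : ℝ) : ℂ)) atTop (𝓝 0) := by
    have hqb : ∀ᶠ n in atTop, ‖b n / a n‖ ≤ Bβ + 1 := by
      have h0 : Tendsto (fun n : ℕ =>
          ‖b n / a n - ((β (n:ℤ) / α (n:ℤ) : ℝ) : ℂ)‖) atTop (𝓝 0) := by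
        simpa using hcb.norm
      filter_upwards [h0.eventually (eventually_le_nhds (by norm_num : (0:ℝ) < 1))]
        with n hn
      calc ‖b n / a n‖
          ≤ ‖b n / a n - ((β (n:ℤ) / α (n:ℤ) : ℝ) : ℂ)‖
            + ‖((β (n:ℤ) / α (n:ℤ) : ℝ) : ℂ)‖ := by
            simpa using norm_add_le
              (b n / a n - ((β (n:ℤ) / α (n:ℤ) : ℝ) : ℂ))
              (((β (n:ℤ) / α (n:ℤ) : ℝ) : ℂ))
        _ ≤ 1 + Bβ := by
            refine add_le_add hn ?_
            rw [Complex.norm_real, Real.norm_eq_abs]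
            exact hBβ n
        _ = Bβ + 1 := by ring
    have hT1 : Tendsto (fun n : ℕ => (b n / a n) * (a n / ta n - 1)) atTop (𝓝 0) := by
      have hg : Tendsto (fun n : ℕ => a n / ta n - 1) atTop (𝓝 0) := by
        have := hw1.sub (tendsto_const_nhds (x := (1:ℂ)))
        simpa using this
      have hgn : Tendsto (fun n : ℕ => (Bβ+1) * ‖a n / ta n - 1‖) atTop (𝓝 0) := by
        have := hg.norm.const_mul (Bβ+1)
        simpa using this
      refine squeeze_zero_norm' ?_ hgn
      filter_upwards [hqb] with n hn
      rw [norm_mul]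
      exact mul_le_mul_of_nonneg_right hn (norm_nonneg _)
    have hT2 : Tendsto (fun n : ℕ => (y n / a n) * (a n / ta n)) atTop (𝓝 0) := by
      have := hy0.mul hw1
      simpa using this
    have hsum := (hT1.add hT2).add hcb
    simp only [add_zero, zero_add] at hsum
    refine hsum.congr fun n => ?_
    have h1 : tb n / ta n = (b n / a n + y n / a n) * (a n / ta n) := by
      rw [htbDef]
      exact (aux_C (ha n) (hta n)).symm
    rw [h1]
    ring
  exact ⟨hA, hB, hC, hD, hE, hF, hG⟩
end

section
/- Let N be a positive integer and let (α_n : n ∈ ℤ), (β_n : n ∈ ℤ) be N-periodic real sequences with α_n > 0. Suppose (a_n : n ≥ 0) and (b_n : n ≥ 0) are sequences with a_n > 0 and b_n ∈ ℝ for every n satisfying: a_n/|a_n| → γ for some γ ∈ ℂ with |γ| = 1; (a_{n−1}/a_n), (b_n/a_n), (γ/a_n) ∈ D̃₁^N(ℂ); |a_n| → ∞; a_{n−1}/a_n − α_{n−1}/α_n → 0; b_n/a_n − β_n/α_n → 0. Let (x_n : n ≥ 0) and (y_n : n ≥ 0) be real sequences with ∑_{n≥0} |x_{n+N}/a_{n+N}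 − x_n/a_n| + ∑_{n≥0} |y_{n+N}/a_{n+N} − y_n/a_n| < ∞ and x_n/a_n → 0, y_n/a_n → 0. Define ã_n = a_n + i·ε_n·x_n and b̃_n = b_n + i·ε_n·y_n, where ε_n = (−1)^{⌊n/N⌋} and i is the imaginary unit. Then (ã_n), (b̃_n) satisfy the same conditions with the same α, β and γ: ã_n/|ã_n| → γ; (ã_{n−1}/ã_n), (b̃_n/ã_n), (γ/ã_n) ∈ D̃₁^N(ℂ); |ã_n| → ∞; ã_{n−1}/ã_n − α_{n−1}/α_n → 0; and b̃_n/ã_n − β_n/α_n → 0. -/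
open Filter Matrix Topology

lemma auxEpsFlip {N : ℕ} (hN : 0 < N) (n : ℕ) :
    ((-1:ℝ)^((n+N)/N)) = -((-1:ℝ)^(n/N)) := by
  rw [Nat.add_div_right n hN, pow_succ]; ring

lemma auxEpsRes {N : ℕ} (hN : 0 < N) {i : ℕ} (hi : i < N) (n : ℕ) :
    ((-1:ℝ)^((n*N+i)/N)) = (-1:ℝ)^n := by
  rw [mul_comm, Nat.mul_add_div hN, Nat.div_eq_of_lt hi, add_zero]

lemma auxNormGe (t : ℝ) {r : ℂ} (hr : r.im = 0) : 1 ≤ ‖1 + Complex.I * t * r‖ := by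
  have h : (1 + Complex.I * t * r).re = 1 := by
    simp [Complex.add_re, Complex.mul_re, Complex.mul_im, hr]
  calc (1:ℝ) = |(1 + Complex.I * t * r).re| := by rw [h]; norm_num
  _ ≤ ‖1 + Complex.I * t * r‖ := Complex.abs_re_le_norm _
  _ = ‖1 + Complex.I * t * r‖ := rfl

lemma auxNormLe {t : ℝ} (ht : |t| = 1) (r : ℂ) : ‖1 + Complex.I * t * r‖ ≤ 1 + ‖r‖ := by
  calc ‖1 + Complex.I * t * r‖ ≤ ‖(1:ℂ)‖ + ‖Complex.I * t * r‖ := norm_add_le _ _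
  _ = 1 + ‖r‖ := by
      rw [norm_one, norm_mul, norm_mul, Complex.norm_I, one_mul, Complex.norm_real]
      rw [Real.norm_eq_abs, ht, one_mul]

lemma auxConj (t : ℝ) {r : ℂ} (hr : (starRingEnd ℂ) r = r) :
    (starRingEnd ℂ) (1 + Complex.I * t * r) = 1 + Complex.I * ((-t : ℝ):ℂ) * r := by
  rw [_root_.map_add, _root_.map_mul, _root_.map_mul, _root_.map_one, Complex.conj_I,
    Complex.conj_ofReal, hr]
  push_cast
  ring

lemma auxKey (A B u v : ℂ) (hu : 1 ≤ ‖u‖) (hv : 1 ≤ ‖v‖) {C : ℝ} (hB : ‖B‖ ≤ C) :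
    ‖A * u⁻¹ - B * v⁻¹‖ ≤ ‖A - B‖ + C * ‖u - v‖ := by
  have hu0 : u ≠ 0 := by intro h; rw [h, norm_zero] at hu; linarith
  have hv0 : v ≠ 0 := by intro h; rw [h, norm_zero] at hv; linarith
  have hC0 : 0 ≤ C := le_trans (norm_nonneg B) hB
  have hiu : ‖u⁻¹‖ ≤ 1 := by rw [norm_inv]; exact inv_le_one_of_one_le₀ hu
  have hiv : ‖v⁻¹‖ ≤ 1 := by rw [norm_inv]; exact inv_le_one_of_one_le₀ hv
  have hid : A * u⁻¹ - B * v⁻¹ = (A - B) * u⁻¹ + B * (v - u) * (u⁻¹ * v⁻¹) := by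
    field_simp
    ring
  have b1 : ‖(A - B) * u⁻¹‖ ≤ ‖A - B‖ := by
    rw [norm_mul]
    calc ‖A - B‖ * ‖u⁻¹‖ ≤ ‖A - B‖ * 1 := mul_le_mul_of_nonneg_left hiu (norm_nonneg _)
    _ = ‖A - B‖ := mul_one _
  have b2 : ‖B * (v - u) * (u⁻¹ * v⁻¹)‖ ≤ C * ‖u - v‖ := by
    rw [norm_mul, norm_mul, norm_sub_rev]
    have h1 : ‖u⁻¹ * v⁻¹‖ ≤ 1 := by
      rw [norm_mul]
      nlinarith [norm_nonneg (u⁻¹), norm_nonneg (v⁻¹)]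
    calc ‖B‖ * ‖u - v‖ * ‖u⁻¹ * v⁻¹‖ ≤ ‖B‖ * ‖u - v‖ * 1 :=
          mul_le_mul_of_nonneg_left h1 (mul_nonneg (norm_nonneg _) (norm_nonneg _))
    _ = ‖B‖ * ‖u - v‖ := mul_one _
    _ ≤ C * ‖u - v‖ := mul_le_mul_of_nonneg_right hB (norm_nonneg _)
  calc ‖A * u⁻¹ - B * v⁻¹‖ ≤ ‖(A - B) * u⁻¹‖ + ‖B * (v - u) * (u⁻¹ * v⁻¹)‖ := by
        rw [hid]; exact norm_add_le _ _
  _ ≤ ‖A - B‖ + C * ‖u - v‖ := add_le_add b1 b2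

lemma auxD1 (A c : ℕ → ℂ) (CA : ℝ)
    (hc : ∀ n, 1 ≤ ‖c n‖)
    (hCA : ∀ n, 1 ≤ n → ‖A n‖ ≤ CA)
    (hs1 : Summable fun n => ‖A (n+2) - (starRingEnd ℂ) (A (n+1))‖)
    (hs2 : Summable fun n => ‖c (n+2) - (starRingEnd ℂ) (c (n+1))‖) :
    MemD1 (fun n => A n * (c n)⁻¹) := by
  have hCA0 : 0 ≤ CA := le_trans (norm_nonneg (A 1)) (hCA 1 le_rfl)
  constructor
  · refine ⟨CA, fun n hn => ?_⟩
    have hinv : ‖(c n)⁻¹‖ ≤ 1 := by rw [norm_inv]; exact inv_le_one_of_one_le₀ (hc n)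
    calc ‖A n * (c n)⁻¹‖ = ‖A n‖ * ‖(c n)⁻¹‖ := norm_mul _ _
    _ ≤ CA * 1 := mul_le_mul (hCA n hn) hinv (norm_nonneg _) hCA0
    _ = CA := mul_one _
  · refine Summable.of_nonneg_of_le (fun n => norm_nonneg _) (fun n => ?_)
      (hs1.add (hs2.mul_left CA))
    have hv : (1:ℝ) ≤ ‖(starRingEnd ℂ) (c (n+1))‖ := by rw [RCLike.norm_conj]; exact hc _
    have hBle : ‖(starRingEnd ℂ) (A (n+1))‖ ≤ CA := by
      rw [RCLike.norm_conj]; exact hCA (n+1) (by omega)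
    have hkey := auxKey (C := CA) (A (n+2)) ((starRingEnd ℂ) (A (n+1))) (c (n+2))
      ((starRingEnd ℂ) (c (n+1))) (hc _) hv hBle
    simpa [_root_.map_mul, _root_.map_inv₀] using hkey

lemma auxPerBound {N : ℕ} (hN : 0 < N) (f : ℕ → ℝ) (hf : ∀ n, f (n + N) = f n) :
    ∃ C, ∀ n, |f n| ≤ C := by
  have key : ∀ k m, f (m + k * N) = f m := by
    intro k
    induction k with
    | zero => simp
    | succ k ih => intro m; rw [Nat.succ_mul, ← add_assoc, hf, ih]
  refine ⟨(Finset.range N).sup' ⟨0, Finset.mem_range.2 hN⟩ (fun m => |f m|), fun n => ?_⟩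
  have h1 : f n = f (n % N) := by
    have h := key (n / N) (n % N)
    rw [Nat.mod_add_div'] at h
    exact h
  rw [h1]
  exact Finset.le_sup' (fun m => |f m|) (Finset.mem_range.2 (Nat.mod_lt n hN))

open Filter Matrix Topology in
/-- Corollary 4: imaginary sign-alternating additive perturbations of real
Jacobi parameters preserve the hypotheses of Corollary 3. -/
theorem statement16
    (N : ℕ) (hN : 1 ≤ N) (γ : ℂ) (hγ : ‖γ‖ = 1)
    (α β : ℤ → ℝ) (hαper : ∀ n, α (n+N) = α n) (hβper : ∀ n, β (n+N) = β n)
    (hαpos : ∀ n, 0 < α n)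
    (a b : ℕ → ℂ)
    (haRe : ∀ n, (a n).im = 0 ∧ 0 < (a n).re) (hbRe : ∀ n, (b n).im = 0)
    (hγlim : Tendsto (fun n : ℕ => a n / (‖a n‖ : ℂ)) atTop (𝓝 γ))
    (hD1a : MemD1N N (fun n => a (n-1) / a n))
    (hD1b : MemD1N N (fun n => b n / a n))
    (hD1g : MemD1N N (fun n => γ / a n))
    (hainf : Tendsto (fun n : ℕ => ‖a n‖) atTop atTop)
    (hca : Tendsto (fun n : ℕ =>
      a (n-1) / a n - ((α ((n:ℤ)-1) / α (n:ℤ) : ℝ) : ℂ)) atTop (𝓝 0))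
    (hcb : Tendsto (fun n : ℕ =>
      b n / a n - ((β (n:ℤ) / α (n:ℤ) : ℝ) : ℂ)) atTop (𝓝 0))
    (x y : ℕ → ℝ)
    (hxsum : Summable (fun n : ℕ =>
      ‖(x (n+N) : ℂ) / a (n+N) - (x n : ℂ) / a n‖))
    (hysum : Summable (fun n : ℕ =>
      ‖(y (n+N) : ℂ) / a (n+N) - (y n : ℂ) / a n‖))
    (hx0 : Tendsto (fun n : ℕ => (x n : ℂ) / a n) atTop (𝓝 0))
    (hy0 : Tendsto (fun n : ℕ => (y n : ℂ) / a n) atTop (𝓝 0))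
    (ta tb : ℕ → ℂ)
    (htaDef : ∀ n : ℕ, ta n = a n + Complex.I * (-1)^(n / N) * (x n : ℂ))
    (htbDef : ∀ n : ℕ, tb n = b n + Complex.I * (-1)^(n / N) * (y n : ℂ)) :
    Tendsto (fun n : ℕ => ta n / (‖ta n‖ : ℂ)) atTop (𝓝 γ) ∧
    MemD1N N (fun n => ta (n-1) / ta n) ∧
    MemD1N N (fun n => tb n / ta n) ∧
    MemD1N N (fun n => γ / ta n) ∧
    Tendsto (fun n : ℕ => ‖ta n‖) atTop atTop ∧
    Tendsto (fun n : ℕ =>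
      ta (n-1) / ta n - ((α ((n:ℤ)-1) / α (n:ℤ) : ℝ) : ℂ)) atTop (𝓝 0) ∧
    Tendsto (fun n : ℕ =>
      tb n / ta n - ((β (n:ℤ) / α (n:ℤ) : ℝ) : ℂ)) atTop (𝓝 0) := by
  
  have hN0 : 0 < N := hN
  have ha0 : ∀ n, a n ≠ 0 := by
    intro n h
    have h2 := (haRe n).2
    rw [h] at h2
    simp at h2
  have haconj : ∀ n, (starRingEnd ℂ) (a n) = a n := fun n => Complex.conj_eq_iff_im.2 (haRe n).1
  have hbconj : ∀ n, (starRingEnd ℂ) (b n) = b n := fun n => Complex.conj_eq_iff_im.2 (hbRe n)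
  set r : ℕ → ℂ := fun n => (x n : ℂ) / a n with hrdef
  set s : ℕ → ℂ := fun n => (y n : ℂ) / a n with hsdef
  have hrconj : ∀ n, (starRingEnd ℂ) (r n) = r n := by
    intro n; simp only [hrdef]; rw [_root_.map_div₀, Complex.conj_ofReal, haconj]
  have hsconj : ∀ n, (starRingEnd ℂ) (s n) = s n := by
    intro n; simp only [hsdef]; rw [_root_.map_div₀, Complex.conj_ofReal, haconj]
  have hrim : ∀ n, (r n).im = 0 := fun n => Complex.conj_eq_iff_im.1 (hrconj n)
  set e : ℕ → ℝ := fun n => (-1:ℝ)^(n/N) with hedef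
  have heabs : ∀ n, |e n| = 1 := by
    intro n; simp only [hedef]; rw [abs_pow, abs_neg, abs_one, one_pow]
  have heflip : ∀ n, e (n+N) = -(e n) := by
    intro n; simp only [hedef]; exact auxEpsFlip hN0 n
  set c : ℕ → ℂ := fun n => 1 + Complex.I * ((e n : ℝ) : ℂ) * r n with hcdef
  have hcge : ∀ n, 1 ≤ ‖c n‖ := by
    intro n; simp only [hcdef]; exact auxNormGe _ (hrim n)
  have hcne : ∀ n, c n ≠ 0 := by
    intro n h; have := hcge n; rw [h, norm_zero] at this; linarith
  have hcle : ∀ n, ‖c n‖ ≤ 1 + ‖r n‖ := by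
    intro n; simp only [hcdef]; exact auxNormLe (heabs n) _
  have hcinvle : ∀ n, ‖(c n)⁻¹‖ ≤ 1 := by
    intro n; rw [norm_inv]; exact inv_le_one_of_one_le₀ (hcge n)
  have hcconj : ∀ n, (starRingEnd ℂ) (c n) = 1 + Complex.I * ((-(e n) : ℝ) : ℂ) * r n := by
    intro n; simp only [hcdef]; exact auxConj _ (hrconj n)
  have hta : ∀ n, ta n = a n * c n := by
    intro n
    rw [htaDef n]
    have h1 : ((-1:ℂ))^(n/N) = ((e n : ℝ) : ℂ) := by simp only [hedef]; push_cast; ring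
    rw [h1]
    simp only [hcdef, hrdef]
    rw [mul_add, mul_one, ← mul_div_assoc, ← mul_div_assoc, mul_div_cancel_left₀ _ (ha0 n)]
  have htb : ∀ n, tb n = b n + Complex.I * ((e n : ℝ) : ℂ) * (y n : ℂ) := by
    intro n
    rw [htbDef n]
    have h1 : ((-1:ℂ))^(n/N) = ((e n : ℝ) : ℂ) := by simp only [hedef]; push_cast; ring
    rw [h1]
  have hsplit : ∀ (p q d : ℂ), p / (q * d) = p / q * d⁻¹ := by
    intro p q d; rw [div_mul_eq_div_div, div_eq_mul_inv]
  have hA : ∀ k, tb k / a k = b k / a k + Complex.I * ((e k : ℝ) : ℂ) * s k := by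
    intro k
    rw [htb k, add_div, mul_div_assoc]
  have hrlim : Tendsto (fun n : ℕ => ‖r n‖) atTop (𝓝 0) := by
    have h : Tendsto r atTop (𝓝 0) := by simpa only [hrdef] using hx0
    simpa using h.norm
  have hslim : Tendsto (fun n : ℕ => ‖s n‖) atTop (𝓝 0) := by
    have h : Tendsto s atTop (𝓝 0) := by simpa only [hsdef] using hy0
    simpa using h.norm
  obtain ⟨Cr, hCr⟩ : ∃ C, ∀ n, ‖r n‖ ≤ C := by
    obtain ⟨C, hC⟩ := hrlim.bddAbove_range
    exact ⟨C, fun n => hC ⟨n, rfl⟩⟩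
  obtain ⟨Cs, hCs⟩ : ∃ C, ∀ n, ‖s n‖ ≤ C := by
    obtain ⟨C, hC⟩ := hslim.bddAbove_range
    exact ⟨C, fun n => hC ⟨n, rfl⟩⟩
  have hCr0 : 0 ≤ Cr := le_trans (norm_nonneg _) (hCr 0)
  have hczero : Tendsto (fun n : ℕ => Complex.I * ((e n : ℝ) : ℂ) * r n) atTop (𝓝 0) := by
    apply squeeze_zero_norm (a := fun n => ‖r n‖) _ hrlim
    intro n
    rw [norm_mul, norm_mul, Complex.norm_I, one_mul, Complex.norm_real, Real.norm_eq_abs, heabs, one_mul]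
  have hc1 : Tendsto c atTop (𝓝 1) := by
    have h := hczero.const_add (1:ℂ)
    simpa only [hcdef, add_zero] using h
  have hcinv1 : Tendsto (fun n : ℕ => (c n)⁻¹) atTop (𝓝 1) := by
    simpa using hc1.inv₀ one_ne_zero
  have hcnorm1 : Tendsto (fun n : ℕ => ‖c n‖) atTop (𝓝 1) := by simpa using hc1.norm
  have hrsum : Summable (fun n : ℕ => ‖r (n+N) - r n‖) := by simpa only [hrdef] using hxsum
  have hssum : Summable (fun n : ℕ => ‖s (n+N) - s n‖) := by simpa only [hsdef] using hysum
  have hinj1 : ∀ i : ℕ, Function.Injective (fun n : ℕ => (n+1)*N+i) := by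
    intro i p q h
    simp only at h
    have hpq : (p+1)*N = (q+1)*N := by omega
    have := Nat.eq_of_mul_eq_mul_right hN0 hpq
    omega
  have hinj2 : ∀ i : ℕ, Function.Injective (fun n : ℕ => (n+1)*N+i-1) := by
    intro i p q h
    simp only at h
    have hp : 0 < (p+1)*N+i := by positivity
    have hq : 0 < (q+1)*N+i := by positivity
    have h' : (p+1)*N+i = (q+1)*N+i := by
      calc (p+1)*N+i = ((p+1)*N+i-1)+1 := (Nat.succ_pred_eq_of_pos hp).symm
      _ = ((q+1)*N+i-1)+1 := by rw [h]
      _ = (q+1)*N+i := Nat.succ_pred_eq_of_pos hq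
    have hpq : (p+1)*N = (q+1)*N := by omega
    have := Nat.eq_of_mul_eq_mul_right hN0 hpq
    omega
  have hidxA : ∀ (i n : ℕ), (n+1)*N+i+N = (n+2)*N+i := by intro i n; ring
  have hidxB : ∀ (i n : ℕ), ((n+1)*N+i-1)+N = (n+2)*N+i-1 := by
    intro i n
    have h2 : (n+2)*N = (n+1)*N+N := by ring
    rw [h2]
    have h1 : 0 < (n+1)*N := by positivity
    generalize hK : (n+1)*N = K at h1 ⊢
    omega
  have hrsubA : ∀ i : ℕ, Summable (fun n : ℕ => ‖r ((n+2)*N+i) - r ((n+1)*N+i)‖) := by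
    intro i
    have h := hrsum.comp_injective (hinj1 i)
    simpa only [Function.comp_def, hidxA] using h
  have hssubA : ∀ i : ℕ, Summable (fun n : ℕ => ‖s ((n+2)*N+i) - s ((n+1)*N+i)‖) := by
    intro i
    have h := hssum.comp_injective (hinj1 i)
    simpa only [Function.comp_def, hidxA] using h
  have hrsubB : ∀ i : ℕ, Summable (fun n : ℕ => ‖r ((n+2)*N+i-1) - r ((n+1)*N+i-1)‖) := by
    intro i
    have h := hrsum.comp_injective (hinj2 i)
    simpa only [Function.comp_def, hidxB] using h
  have heA : ∀ (i n : ℕ), e ((n+2)*N+i) = -(e ((n+1)*N+i)) := by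
    intro i n; rw [← hidxA i n]; exact heflip _
  have heB : ∀ (i n : ℕ), e ((n+2)*N+i-1) = -(e ((n+1)*N+i-1)) := by
    intro i n; rw [← hidxB i n]; exact heflip _
  have hcdiffsum : ∀ i : ℕ,
      Summable (fun n : ℕ => ‖c ((n+2)*N+i) - (starRingEnd ℂ) (c ((n+1)*N+i))‖) := by
    intro i
    refine Summable.of_nonneg_of_le (fun n => norm_nonneg _) (fun n => ?_) (hrsubA i)
    rw [hcconj]
    have h3 : (-(e ((n+1)*N+i)) : ℝ) = e ((n+2)*N+i) := by rw [heA i n]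
    rw [h3]
    simp only [hcdef]
    have h4 : (1 + Complex.I * ((e ((n+2)*N+i) : ℝ) : ℂ) * r ((n+2)*N+i))
        - (1 + Complex.I * ((e ((n+2)*N+i) : ℝ) : ℂ) * r ((n+1)*N+i))
        = Complex.I * ((e ((n+2)*N+i) : ℝ) : ℂ) * (r ((n+2)*N+i) - r ((n+1)*N+i)) := by ring
    rw [h4, norm_mul, norm_mul, Complex.norm_I, one_mul, Complex.norm_real, Real.norm_eq_abs, heabs, one_mul]
  refine ⟨?_, ?_, ?_, ?_, ?_, ?_, ?_⟩
  · -- Goal 1 : ta/‖ta‖ → γ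
    have hccast : Tendsto (fun n : ℕ => ((‖c n‖ : ℝ) : ℂ)) atTop (𝓝 1) := by
      have h := (Complex.continuous_ofReal.tendsto 1).comp hcnorm1
      simpa [Function.comp_def] using h
    have hlast : Tendsto (fun n : ℕ => c n / ((‖c n‖ : ℝ) : ℂ)) atTop (𝓝 1) := by
      have h := hc1.div hccast one_ne_zero
      simpa only [div_one, Pi.div_def] using h
    have hfun : (fun n : ℕ => ta n / ((‖ta n‖ : ℝ) : ℂ))
        = fun n : ℕ => (a n / ((‖a n‖ : ℝ) : ℂ)) * (c n / ((‖c n‖ : ℝ) : ℂ)) := by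
      funext n
      rw [hta n, norm_mul, Complex.ofReal_mul, mul_div_mul_comm]
    rw [hfun]
    simpa using hγlim.mul hlast
  · -- Goal 2 : MemD1N (ta (n-1) / ta n)
    intro i hi
    obtain ⟨Ca, hCa⟩ := (hD1a i hi).1
    have hCa0 : 0 ≤ Ca := le_trans (norm_nonneg _) (hCa 1 le_rfl)
    have hbound : ∀ n, 1 ≤ n →
        ‖a (n*N+i-1) / a (n*N+i) * c (n*N+i-1)‖ ≤ Ca * (1+Cr) := by
      intro n hn
      rw [norm_mul]
      exact mul_le_mul (hCa n hn) (le_trans (hcle _) (by linarith [hCr (n*N+i-1)]))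
        (norm_nonneg _) hCa0
    have hs1 : Summable (fun n : ℕ =>
        ‖a ((n+2)*N+i-1) / a ((n+2)*N+i) * c ((n+2)*N+i-1)
          - (starRingEnd ℂ) (a ((n+1)*N+i-1) / a ((n+1)*N+i) * c ((n+1)*N+i-1))‖) := by
      refine Summable.of_nonneg_of_le (fun n => norm_nonneg _) (fun n => ?_)
        ((((hD1a i hi).2).mul_right (1+Cr)).add ((hrsubB i).mul_left Ca))
      have hconjd : (starRingEnd ℂ) (c ((n+1)*N+i-1))
          = 1 + Complex.I * ((e ((n+2)*N+i-1) : ℝ) : ℂ) * r ((n+1)*N+i-1) := by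
        rw [hcconj]
        have h5 : (-(e ((n+1)*N+i-1)) : ℝ) = e ((n+2)*N+i-1) := by rw [heB i n]
        rw [h5]
      have hid : a ((n+2)*N+i-1) / a ((n+2)*N+i) * c ((n+2)*N+i-1)
          - (starRingEnd ℂ) (a ((n+1)*N+i-1) / a ((n+1)*N+i) * c ((n+1)*N+i-1))
          = (a ((n+2)*N+i-1) / a ((n+2)*N+i)
              - (starRingEnd ℂ) (a ((n+1)*N+i-1) / a ((n+1)*N+i)))
              * ((starRingEnd ℂ) (c ((n+1)*N+i-1)))
            + (a ((n+2)*N+i-1) / a ((n+2)*N+i))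
              * (Complex.I * ((e ((n+2)*N+i-1) : ℝ) : ℂ)
                  * (r ((n+2)*N+i-1) - r ((n+1)*N+i-1))) := by
        rw [_root_.map_mul, hconjd]
        simp only [hcdef]
        ring
      rw [hid]
      refine le_trans (norm_add_le _ _) (add_le_add ?_ ?_)
      · rw [norm_mul, RCLike.norm_conj]
        exact mul_le_mul_of_nonneg_left
          (le_trans (hcle _) (by linarith [hCr ((n+1)*N+i-1)])) (norm_nonneg _)
      · rw [norm_mul, norm_mul, norm_mul, Complex.norm_I, one_mul, Complex.norm_real, Real.norm_eq_abs,
          heabs, one_mul]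
        exact mul_le_mul_of_nonneg_right (hCa (n+2) (by omega)) (norm_nonneg _)
    have hres := auxD1 (fun n => a (n*N+i-1) / a (n*N+i) * c (n*N+i-1))
      (fun n => c (n*N+i)) (Ca * (1+Cr)) (fun n => hcge _) hbound hs1 (hcdiffsum i)
    have hfun : (fun n : ℕ => ta (n*N+i-1) / ta (n*N+i))
        = fun n : ℕ => a (n*N+i-1) / a (n*N+i) * c (n*N+i-1) * (c (n*N+i))⁻¹ := by
      funext n
      rw [hta (n*N+i-1), hta (n*N+i), hsplit, mul_div_right_comm]
    have hgoal : MemD1 (fun n : ℕ => ta (n*N+i-1) / ta (n*N+i)) := by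
      rw [hfun]; exact hres
    exact hgoal
  · -- Goal 3 : MemD1N (tb n / ta n)
    intro i hi
    obtain ⟨Cb, hCb⟩ := (hD1b i hi).1
    have hbound : ∀ n, 1 ≤ n → ‖tb (n*N+i) / a (n*N+i)‖ ≤ Cb + Cs := by
      intro n hn
      rw [hA]
      refine le_trans (norm_add_le _ _) (add_le_add (hCb n hn) ?_)
      rw [norm_mul, norm_mul, Complex.norm_I, one_mul, Complex.norm_real, Real.norm_eq_abs, heabs, one_mul]
      exact hCs _
    have hs1 : Summable (fun n : ℕ =>
        ‖tb ((n+2)*N+i) / a ((n+2)*N+i)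
          - (starRingEnd ℂ) (tb ((n+1)*N+i) / a ((n+1)*N+i))‖) := by
      refine Summable.of_nonneg_of_le (fun n => norm_nonneg _) (fun n => ?_)
        (((hD1b i hi).2).add (hssubA i))
      have hid : tb ((n+2)*N+i) / a ((n+2)*N+i)
          - (starRingEnd ℂ) (tb ((n+1)*N+i) / a ((n+1)*N+i))
          = (b ((n+2)*N+i) / a ((n+2)*N+i)
              - (starRingEnd ℂ) (b ((n+1)*N+i) / a ((n+1)*N+i)))
            + Complex.I * ((e ((n+2)*N+i) : ℝ) : ℂ)
                * (s ((n+2)*N+i) - s ((n+1)*N+i)) := by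
        rw [hA, hA, _root_.map_add, _root_.map_mul, _root_.map_mul, Complex.conj_I, Complex.conj_ofReal, hsconj]
        rw [heA i n]
        push_cast
        ring
      rw [hid]
      refine le_trans (norm_add_le _ _) (add_le_add le_rfl (le_of_eq ?_))
      rw [norm_mul, norm_mul, Complex.norm_I, one_mul, Complex.norm_real, Real.norm_eq_abs, heabs, one_mul]
    have hres := auxD1 (fun n => tb (n*N+i) / a (n*N+i)) (fun n => c (n*N+i))
      (Cb + Cs) (fun n => hcge _) hbound hs1 (hcdiffsum i)
    have hfun : (fun n : ℕ => tb (n*N+i) / ta (n*N+i))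
        = fun n : ℕ => tb (n*N+i) / a (n*N+i) * (c (n*N+i))⁻¹ := by
      funext n
      rw [hta (n*N+i), hsplit]
    have hgoal : MemD1 (fun n : ℕ => tb (n*N+i) / ta (n*N+i)) := by
      rw [hfun]; exact hres
    exact hgoal
  · -- Goal 4 : MemD1N (γ / ta n)
    intro i hi
    obtain ⟨Cg, hCg⟩ := (hD1g i hi).1
    have hbound : ∀ n, 1 ≤ n → ‖γ / a (n*N+i)‖ ≤ Cg := fun n hn => hCg n hn
    have hs1 : Summable (fun n : ℕ =>
        ‖γ / a ((n+2)*N+i) - (starRingEnd ℂ) (γ / a ((n+1)*N+i))‖) := (hD1g i hi).2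
    have hres := auxD1 (fun n => γ / a (n*N+i)) (fun n => c (n*N+i)) Cg
      (fun n => hcge _) hbound hs1 (hcdiffsum i)
    have hfun : (fun n : ℕ => γ / ta (n*N+i))
        = fun n : ℕ => γ / a (n*N+i) * (c (n*N+i))⁻¹ := by
      funext n
      rw [hta (n*N+i), hsplit]
    have hgoal : MemD1 (fun n : ℕ => γ / ta (n*N+i)) := by
      rw [hfun]; exact hres
    exact hgoal
  · -- Goal 5 : ‖ta n‖ → ∞
    refine tendsto_atTop_mono (fun n => ?_) hainf
    rw [hta n, norm_mul]
    exact le_mul_of_one_le_right (norm_nonneg _) (hcge n)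
  · -- Goal 6
    obtain ⟨Cα, hCα⟩ := auxPerBound hN0 (fun n : ℕ => α ((n:ℤ)-1) / α (n:ℤ)) (by
      intro n
      push_cast
      rw [show ((n:ℤ)+(N:ℤ)-1) = ((n:ℤ)-1)+(N:ℤ) by ring, hαper, hαper])
    obtain ⟨Cd, hCd⟩ := hca.norm.bddAbove_range
    have hCd' : ∀ n : ℕ, ‖a (n-1) / a n - ((α ((n:ℤ)-1) / α (n:ℤ) : ℝ) : ℂ)‖ ≤ Cd :=
      fun n => hCd ⟨n, rfl⟩
    have hρbd : ∀ n : ℕ, ‖a (n-1) / a n‖ ≤ Cd + Cα := by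
      intro n
      have h1 : a (n-1) / a n = (a (n-1) / a n - ((α ((n:ℤ)-1) / α (n:ℤ) : ℝ) : ℂ))
          + ((α ((n:ℤ)-1) / α (n:ℤ) : ℝ) : ℂ) := by ring
      rw [h1]
      refine le_trans (norm_add_le _ _) (add_le_add (hCd' n) ?_)
      rw [Complex.norm_real, Real.norm_eq_abs]
      exact hCα n
    have hcshift : Tendsto (fun n : ℕ => c (n-1)) atTop (𝓝 1) :=
      hc1.comp (tendsto_sub_atTop_nat 1)
    have hφ : Tendsto (fun n : ℕ => c (n-1) * (c n)⁻¹ - 1) atTop (𝓝 0) := by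
      have h := (hcshift.mul hcinv1).sub_const 1
      simpa using h
    have hterm : Tendsto (fun n : ℕ => (a (n-1) / a n) * (c (n-1) * (c n)⁻¹ - 1))
        atTop (𝓝 0) := by
      apply squeeze_zero_norm (a := fun n => (Cd+Cα) * ‖c (n-1) * (c n)⁻¹ - 1‖) ?_ ?_
      · intro n
        rw [norm_mul]
        exact mul_le_mul_of_nonneg_right (hρbd n) (norm_nonneg _)
      · have h := hφ.norm.const_mul (Cd+Cα)
        simpa using h
    have hfun : (fun n : ℕ => ta (n-1) / ta n - ((α ((n:ℤ)-1) / α (n:ℤ) : ℝ) : ℂ))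
        = fun n : ℕ => (a (n-1) / a n - ((α ((n:ℤ)-1) / α (n:ℤ) : ℝ) : ℂ))
            + (a (n-1) / a n) * (c (n-1) * (c n)⁻¹ - 1) := by
      funext n
      have hk : ta (n-1) / ta n = (a (n-1) / a n) * (c (n-1) * (c n)⁻¹) := by
        rw [hta (n-1), hta n, mul_div_mul_comm, div_eq_mul_inv (c (n-1))]
      rw [hk]
      ring
    rw [hfun]
    simpa using hca.add hterm
  · -- Goal 7
    obtain ⟨Cβ, hCβ⟩ := auxPerBound hN0 (fun n : ℕ => β (n:ℤ) / α (n:ℤ)) (by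
      intro n
      push_cast
      rw [hβper, hαper])
    have hfun : (fun n : ℕ => tb n / ta n - ((β (n:ℤ) / α (n:ℤ) : ℝ) : ℂ))
        = fun n : ℕ => (b n / a n - ((β (n:ℤ) / α (n:ℤ) : ℝ) : ℂ)) * (c n)⁻¹
            + (Complex.I * ((e n : ℝ) : ℂ) * s n) * (c n)⁻¹
            + ((β (n:ℤ) / α (n:ℤ) : ℝ) : ℂ) * ((c n)⁻¹ - 1) := by
      funext n
      rw [hta n, hsplit, hA n]
      ring
    rw [hfun]
    have t1 : Tendsto (fun n : ℕ =>
        (b n / a n - ((β (n:ℤ) / α (n:ℤ) : ℝ) : ℂ)) * (c n)⁻¹) atTop (𝓝 0) := by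
      apply squeeze_zero_norm
        (a := fun n => ‖b n / a n - ((β (n:ℤ) / α (n:ℤ) : ℝ) : ℂ)‖) ?_ (by simpa using hcb.norm)
      intro n
      rw [norm_mul]
      exact le_trans (mul_le_mul_of_nonneg_left (hcinvle n) (norm_nonneg _))
        (le_of_eq (mul_one _))
    have t2 : Tendsto (fun n : ℕ =>
        (Complex.I * ((e n : ℝ) : ℂ) * s n) * (c n)⁻¹) atTop (𝓝 0) := by
      apply squeeze_zero_norm (a := fun n => ‖s n‖) ?_ hslim
      intro n
      rw [norm_mul, norm_mul, norm_mul, Complex.norm_I, one_mul, Complex.norm_real, Real.norm_eq_abs,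
        heabs, one_mul]
      exact le_trans (mul_le_mul_of_nonneg_left (hcinvle n) (norm_nonneg _))
        (le_of_eq (mul_one _))
    have t3 : Tendsto (fun n : ℕ =>
        ((β (n:ℤ) / α (n:ℤ) : ℝ) : ℂ) * ((c n)⁻¹ - 1)) atTop (𝓝 0) := by
      apply squeeze_zero_norm (a := fun n => Cβ * ‖(c n)⁻¹ - 1‖) ?_ ?_
      · intro n
        rw [norm_mul, Complex.norm_real, Real.norm_eq_abs]
        exact mul_le_mul_of_nonneg_right (hCβ n) (norm_nonneg _)
      · have h := ((hcinv1.sub_const 1).norm).const_mul Cβ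
        simpa using h
    simpa using (t1.add t2).add t3
end

section
/- Let N be a positive integer, i ∈ {0, 1, …, N−1} and K ⊂ ℂ compact. Suppose (X_{nN+i} : n ≥ 1) ∈ D̃₁(K, GL(2, ℂ)) and lim_{n→∞} a_{nN+i−1}/a_{(n+1)N+i−1} = 1. Then the sequence ((a_{(n+1)N+i−1}/a_{nN+i−1})·X_{nN+i} : n ≥ 1) also belongs to D̃₁(K, GL(2, ℂ)). (Here one uses that det X_{nN+i}(z) = a_{nN+i−1}/a_{(n+1)N+i−1} for every z.) -/
open Filter Matrix Topology

open Filter Matrix Topology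
set_option synthInstance.maxHeartbeats 1000000
set_option maxHeartbeats 1000000


lemma opNorm_nonneg (X : Matrix (Fin 2) (Fin 2) ℂ) : 0 ≤ opNorm X := norm_nonneg _

lemma opNorm_smul (c : ℂ) (X : Matrix (Fin 2) (Fin 2) ℂ) :
    opNorm (c • X) = ‖c‖ * opNorm X := by
  unfold opNorm; rw [_root_.map_smul]
  exact norm_smul c (Matrix.toEuclideanCLM (𝕜 := ℂ) X)

lemma opNorm_add_le (X Y : Matrix (Fin 2) (Fin 2) ℂ) :
    opNorm (X + Y) ≤ opNorm X + opNorm Y := by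
  unfold opNorm; rw [map_add]; exact norm_add_le _ _

lemma entry_le_opNorm (X : Matrix (Fin 2) (Fin 2) ℂ) (p q : Fin 2) :
    ‖X p q‖ ≤ opNorm X := by
  set T := Matrix.toEuclideanCLM (𝕜 := ℂ) X
  set x : EuclideanSpace ℂ (Fin 2) := (WithLp.equiv 2 _).symm (Pi.single q 1)
  have h1 : (T x) p = X p q := by
    have hx := Matrix.toEuclideanCLM_toLp (𝕜 := ℂ) X (Pi.single q 1)
    show (Matrix.toEuclideanCLM (𝕜 := ℂ) X x) p = X p q
    rw [show x = WithLp.toLp 2 (Pi.single q 1) from rfl, hx]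
    simp [Matrix.toLin'_apply, Matrix.mulVec_single]
  have h2 : ‖(T x) p‖ ≤ ‖T x‖ := by
    rw [EuclideanSpace.norm_eq]
    have : ‖(T x) p‖ = Real.sqrt (‖(T x) p‖^2) := by
      rw [Real.sqrt_sq (norm_nonneg _)]
    rw [this]
    apply Real.sqrt_le_sqrt
    exact Finset.single_le_sum (f := fun i => ‖(T x) i‖^2) (fun i _ => sq_nonneg _) (Finset.mem_univ p)
  have h3 : ‖x‖ = 1 := by
    simpa [x] using EuclideanSpace.norm_single (𝕜 := ℂ) q 1
  calc ‖X p q‖ = ‖(T x) p‖ := by rw [h1]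
    _ ≤ ‖T x‖ := h2
    _ ≤ ‖T‖ * ‖x‖ := T.le_opNorm x
    _ = ‖T‖ := by rw [h3, mul_one]
    _ = opNorm X := rfl

lemma opNorm_sub_le (X Y : Matrix (Fin 2) (Fin 2) ℂ) :
    opNorm (X - Y) ≤ opNorm X + opNorm Y := by
  unfold opNorm; rw [map_sub]; exact norm_sub_le _ _

lemma det_mconj (X : Matrix (Fin 2) (Fin 2) ℂ) :
    (mconj X).det = (starRingEnd ℂ) X.det := by
  unfold mconj
  rw [← RingHom.mapMatrix_apply, ← RingHom.map_det]

lemma mconj_smul (c : ℂ) (X : Matrix (Fin 2) (Fin 2) ℂ) :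
    mconj (c • X) = (starRingEnd ℂ) c • mconj X := by
  ext p q
  simp [mconj, Matrix.map_apply, Matrix.smul_apply, smul_eq_mul, _root_.map_mul]

lemma det_diff_le (A B : Matrix (Fin 2) (Fin 2) ℂ) :
    ‖A.det - B.det‖ ≤ 2 * (opNorm A + opNorm B) * opNorm (A - B) := by
  have h1 : A.det - B.det = A 0 0 * (A 1 1 - B 1 1) + (A 0 0 - B 0 0) * B 1 1
      - A 0 1 * (A 1 0 - B 1 0) - (A 0 1 - B 0 1) * B 1 0 := by
    simp only [Matrix.det_fin_two]; ring
  have key : ∀ p q : Fin 2, ‖A p q - B p q‖ ≤ opNorm (A - B) := by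
    intro p q
    have := entry_le_opNorm (A - B) p q
    simpa [Matrix.sub_apply] using this
  calc ‖A.det - B.det‖
      ≤ ‖A 0 0 * (A 1 1 - B 1 1) + (A 0 0 - B 0 0) * B 1 1
          - A 0 1 * (A 1 0 - B 1 0)‖ + ‖(A 0 1 - B 0 1) * B 1 0‖ := by
        rw [h1]; exact norm_sub_le _ _
    _ ≤ (‖A 0 0 * (A 1 1 - B 1 1) + (A 0 0 - B 0 0) * B 1 1‖
          + ‖A 0 1 * (A 1 0 - B 1 0)‖) + ‖(A 0 1 - B 0 1) * B 1 0‖ := by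
        gcongr; exact norm_sub_le _ _
    _ ≤ ((‖A 0 0 * (A 1 1 - B 1 1)‖ + ‖(A 0 0 - B 0 0) * B 1 1‖)
          + ‖A 0 1 * (A 1 0 - B 1 0)‖) + ‖(A 0 1 - B 0 1) * B 1 0‖ := by
        gcongr; exact norm_add_le _ _
    _ ≤ ((opNorm A * opNorm (A - B) + opNorm (A - B) * opNorm B)
          + opNorm A * opNorm (A - B)) + opNorm (A - B) * opNorm B := by
        have b1 : ‖A 0 0 * (A 1 1 - B 1 1)‖ ≤ opNorm A * opNorm (A - B) := by
          rw [norm_mul]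
          exact mul_le_mul (entry_le_opNorm A 0 0) (key 1 1) (norm_nonneg _) (opNorm_nonneg _)
        have b2 : ‖(A 0 0 - B 0 0) * B 1 1‖ ≤ opNorm (A - B) * opNorm B := by
          rw [norm_mul]
          exact mul_le_mul (key 0 0) (entry_le_opNorm B 1 1) (norm_nonneg _) (opNorm_nonneg _)
        have b3 : ‖A 0 1 * (A 1 0 - B 1 0)‖ ≤ opNorm A * opNorm (A - B) := by
          rw [norm_mul]
          exact mul_le_mul (entry_le_opNorm A 0 1) (key 1 0) (norm_nonneg _) (opNorm_nonneg _)
        have b4 : ‖(A 0 1 - B 0 1) * B 1 0‖ ≤ opNorm (A - B) * opNorm B := by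
          rw [norm_mul]
          exact mul_le_mul (key 0 1) (entry_le_opNorm B 1 0) (norm_nonneg _) (opNorm_nonneg _)
        exact add_le_add (add_le_add (add_le_add b1 b2) b3) b4
    _ = 2 * (opNorm A + opNorm B) * opNorm (A - B) := by ring

lemma det_Bmat (a b : ℕ → ℂ) (j : ℕ) (z : ℂ) :
    (Bmat a b j z).det = a (j-1) / a j := by
  simp [Bmat, Matrix.det_fin_two_of]

lemma prod_ratio (a : ℕ → ℂ) (ha : ∀ n, a n ≠ 0) (n : ℕ) (hn : 1 ≤ n) :
    ∀ N, ((List.range N).map fun j => a (n+j-1) / a (n+j)).prod = a (n-1) / a (n+N-1) := by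
  intro N
  induction N with
  | zero => simp [div_self (ha (n-1))]
  | succ N ih =>
      rw [List.range_succ, List.map_append, List.prod_append, ih]
      simp only [List.map_cons, List.map_nil, List.prod_cons, List.prod_nil, mul_one]
      rw [show n + (N+1) - 1 = n + N from by omega]
      rw [div_mul_div_comm, mul_comm (a (n+N-1)) (a (n+N)),
        mul_div_mul_right _ _ (ha (n+N-1))]

lemma det_transfer (a b : ℕ → ℂ) (ha : ∀ n, a n ≠ 0) (N n : ℕ) (hn : 1 ≤ n) (z : ℂ) :
    (transfer a b N n z).det = a (n-1) / a (n+N-1) := by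
  have h0 : (transfer a b N n z).det
      = ((List.range N).map fun j => a (n+j-1) / a (n+j)).prod := by
    unfold transfer
    rw [← Matrix.coe_detMonoidHom]
    rw [MonoidHom.map_list_prod, List.map_reverse, List.prod_reverse, List.map_map]
    congr 1
    apply List.map_congr_left
    intro j _
    simp [Function.comp, det_Bmat]
  rw [h0, prod_ratio a ha n hn N]

open Filter Matrix Topology in
/-- From the proof of Theorem A: the rescaled transfer matrices stay in the
twisted Stolz class. -/
theorem statement19
    (a b : ℕ → ℂ) (ha : ∀ n, a n ≠ 0)
    (N : ℕ) (hN : 1 ≤ N) (i : ℕ) (hi : i < N)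
    (K : Set ℂ) (hK : IsCompact K)
    (hD1 : MemD1K K (fun n z => transfer a b N (n*N+i) z))
    (hratio : Tendsto (fun n : ℕ => a (n*N+i-1) / a ((n+1)*N+i-1)) atTop (𝓝 1)) :
    MemD1K K (fun n z =>
      (a ((n+1)*N+i-1) / a (n*N+i-1)) • transfer a b N (n*N+i) z) := by
  set c : ℕ → ℂ := fun n => a ((n+1)*N+i-1) / a (n*N+i-1) with hc_def
  set X : ℕ → ℂ → Matrix (Fin 2) (Fin 2) ℂ := fun n z => transfer a b N (n*N+i) z with hX_def
  obtain ⟨hcont, hunit, ⟨C, hC⟩, ⟨g, hg, hgb⟩⟩ := hD1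
  have hc0 : ∀ n, c n ≠ 0 := fun n => div_ne_zero (ha _) (ha _)
  have hctend : Tendsto c atTop (𝓝 1) := by
    have : c = fun n : ℕ => (a (n*N+i-1) / a ((n+1)*N+i-1))⁻¹ := by
      funext n; rw [inv_div]
    rw [this]
    simpa using hratio.inv₀ one_ne_zero
  have hnormc : Tendsto (fun n => ‖c n‖) atTop (𝓝 1) := by
    simpa using hctend.norm
  obtain ⟨C₂, hC₂'⟩ := hnormc.bddAbove_range
  have hC₂ : ∀ n, ‖c n‖ ≤ C₂ := fun n => hC₂' ⟨n, rfl⟩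
  have hC₂pos : 0 ≤ C₂ := le_trans (norm_nonneg _) (hC₂ 0)
  rcases K.eq_empty_or_nonempty with rfl | ⟨z₀, hz₀⟩
  · exact ⟨fun n _ => (by simp : ContinuousOn _ (∅ : Set ℂ)),
      fun n _ z hz => absurd hz (Set.notMem_empty z),
      ⟨0, fun n _ z hz => absurd hz (Set.notMem_empty z)⟩,
      ⟨0, summable_zero, fun n _ z hz => absurd hz (Set.notMem_empty z)⟩⟩
  have hCpos : 0 ≤ C := le_trans (opNorm_nonneg _) (hC 1 le_rfl z₀ hz₀)
  have hgpos : ∀ n, 1 ≤ n → 0 ≤ g n :=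
    fun n hn => le_trans (opNorm_nonneg _) (hgb n hn z₀ hz₀)
  obtain ⟨G, hG'⟩ := hg.tendsto_atTop_zero.bddAbove_range
  have hG : ∀ n, g n ≤ G := fun n => hG' ⟨n, rfl⟩
  -- determinant identity
  have hdet : ∀ n, 1 ≤ n → (X n z₀).det = (c n)⁻¹ := by
    intro n hn
    have hn1 : 1 ≤ n*N+i := by
      have : 1*1 ≤ n*N := Nat.mul_le_mul hn hN
      omega
    have e : n*N+i+N-1 = (n+1)*N+i-1 := by
      have h : (n+1)*N = n*N+N := by ring
      omega
    rw [hX_def]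
    rw [det_transfer a b ha N (n*N+i) hn1 z₀, e, hc_def, inv_div]
  -- summability of the conjugate differences of c
  set h : ℕ → ℝ := fun n => ‖c (n+1) - (starRingEnd ℂ) (c n)‖ with hh_def
  have hkey : ∀ n, 1 ≤ n → h n ≤ C₂ * C₂ * (2 * (C + (C + g n)) * g n) := by
    intro n hn
    have hA : opNorm (X (n+1) z₀) ≤ C := hC (n+1) (by omega) z₀ hz₀
    have hAB : opNorm (X (n+1) z₀ - mconj (X n z₀)) ≤ g n := hgb n hn z₀ hz₀
    have hB : opNorm (mconj (X n z₀)) ≤ C + g n := by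
      have : mconj (X n z₀) = X (n+1) z₀ - (X (n+1) z₀ - mconj (X n z₀)) := by abel
      rw [this]
      exact le_trans (opNorm_sub_le _ _) (add_le_add hA hAB)
    have hdd : ‖(X (n+1) z₀).det - (mconj (X n z₀)).det‖
        ≤ 2 * (C + (C + g n)) * g n := by
      refine le_trans (det_diff_le _ _) ?_
      have := opNorm_nonneg (X (n+1) z₀ - mconj (X n z₀))
      have h2 : opNorm (X (n+1) z₀) + opNorm (mconj (X n z₀)) ≤ C + (C + g n) :=
        add_le_add hA hB
      have h3 : (0:ℝ) ≤ opNorm (X (n+1) z₀) + opNorm (mconj (X n z₀)) :=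
        add_nonneg (opNorm_nonneg _) (opNorm_nonneg _)
      calc 2 * (opNorm (X (n+1) z₀) + opNorm (mconj (X n z₀)))
            * opNorm (X (n+1) z₀ - mconj (X n z₀))
          ≤ 2 * (C + (C + g n)) * opNorm (X (n+1) z₀ - mconj (X n z₀)) := by
            apply mul_le_mul_of_nonneg_right _ (opNorm_nonneg _)
            linarith
        _ ≤ 2 * (C + (C + g n)) * g n := by
            apply mul_le_mul_of_nonneg_left hAB
            have := hgpos n hn
            linarith
    have hid : c (n+1) - (starRingEnd ℂ) (c n)
        = -(c (n+1) * (starRingEnd ℂ) (c n))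
          * ((X (n+1) z₀).det - (mconj (X n z₀)).det) := by
      rw [hdet (n+1) (by omega), det_mconj, hdet n hn, map_inv₀]
      have h1 : c (n+1) ≠ 0 := hc0 (n+1)
      have h2 : (starRingEnd ℂ) (c n) ≠ 0 := by
        intro hh
        have := congrArg (starRingEnd ℂ) hh
        rw [Complex.conj_conj, map_zero] at this
        exact hc0 n this
      have key : ∀ x y : ℂ, x ≠ 0 → y ≠ 0 → x - y = -(x*y) * (x⁻¹ - y⁻¹) := by
        intro x y hx hy
        field_simp
        ring
      exact key _ _ h1 h2
    rw [hh_def]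
    simp only
    rw [hid, norm_mul, norm_neg, norm_mul]
    rw [RCLike.norm_conj]
    exact mul_le_mul (mul_le_mul (hC₂ _) (hC₂ _) (norm_nonneg _) hC₂pos) hdd
      (norm_nonneg _) (mul_nonneg hC₂pos hC₂pos)
  have hsum_h : Summable h := by
    rw [← summable_nat_add_iff 1]
    apply Summable.of_nonneg_of_le (fun n => norm_nonneg _)
      (fun n => hkey (n+1) (by omega))
    have hgs : Summable (fun n => g (n+1)) := (summable_nat_add_iff 1).mpr hg
    have : ∀ n, C₂ * C₂ * (2 * (C + (C + g (n+1))) * g (n+1))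
        ≤ (C₂ * C₂ * (2 * (C + (C + G)))) * g (n+1) := by
      intro n
      have hgp := hgpos (n+1) (by omega)
      have hgG := hG (n+1)
      have hin : 2 * (C + (C + g (n+1))) * g (n+1) ≤ 2 * (C + (C + G)) * g (n+1) :=
        mul_le_mul_of_nonneg_right (by linarith) hgp
      calc C₂ * C₂ * (2 * (C + (C + g (n+1))) * g (n+1))
          ≤ C₂ * C₂ * (2 * (C + (C + G)) * g (n+1)) :=
            mul_le_mul_of_nonneg_left hin (mul_nonneg hC₂pos hC₂pos)
        _ = (C₂ * C₂ * (2 * (C + (C + G)))) * g (n+1) := by ring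
    apply Summable.of_nonneg_of_le _ this (hgs.mul_left _)
    intro n
    have hgp := hgpos (n+1) (by omega)
    positivity
  -- assemble
  refine ⟨?_, ?_, ?_, ?_⟩
  · intro n hn
    exact (hcont n hn).const_smul (c n)
  · intro n hn z hz
    have hu := hunit n hn z hz
    rw [Matrix.isUnit_iff_isUnit_det] at hu ⊢
    rw [Matrix.det_smul]
    exact ((isUnit_iff_ne_zero).mpr (pow_ne_zero _ (hc0 n))).mul hu
  · refine ⟨C₂ * C, fun n hn z hz => ?_⟩
    rw [opNorm_smul]
    exact mul_le_mul (hC₂ n) (hC n hn z hz) (opNorm_nonneg _) hC₂pos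
  · refine ⟨fun n => C₂ * g n + (C + G) * h n, ?_, ?_⟩
    · exact (hg.mul_left C₂).add (hsum_h.mul_left (C + G))
    · intro n hn z hz
      have hAB : opNorm (X (n+1) z - mconj (X n z)) ≤ g n := hgb n hn z hz
      have hA : opNorm (X (n+1) z) ≤ C := hC (n+1) (by omega) z hz
      have hB : opNorm (mconj (X n z)) ≤ C + G := by
        have e : mconj (X n z) = X (n+1) z - (X (n+1) z - mconj (X n z)) := by abel
        rw [e]
        exact le_trans (opNorm_sub_le _ _)
          (add_le_add hA (le_trans hAB (hG n)))
      have hdec : c (n+1) • X (n+1) z - mconj (c n • X n z)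
          = c (n+1) • (X (n+1) z - mconj (X n z))
            + (c (n+1) - (starRingEnd ℂ) (c n)) • mconj (X n z) := by
        rw [mconj_smul, smul_sub, sub_smul]
        abel
      calc opNorm (c (n+1) • X (n+1) z - mconj (c n • X n z))
          ≤ opNorm (c (n+1) • (X (n+1) z - mconj (X n z)))
            + opNorm ((c (n+1) - (starRingEnd ℂ) (c n)) • mconj (X n z)) := by
            rw [hdec]; exact opNorm_add_le _ _
        _ = ‖c (n+1)‖ * opNorm (X (n+1) z - mconj (X n z))
            + ‖c (n+1) - (starRingEnd ℂ) (c n)‖ * opNorm (mconj (X n z)) := by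
            rw [opNorm_smul, opNorm_smul]
        _ ≤ C₂ * g n + (C + G) * h n := by
            apply add_le_add
            · exact mul_le_mul (hC₂ _) hAB (opNorm_nonneg _) hC₂pos
            · rw [mul_comm (C + G)]
              exact mul_le_mul le_rfl hB (opNorm_nonneg _) (norm_nonneg _)
end
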